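/- Let (E,‖·‖) be a Banach space, D a dense subset of E, and (P_t)_{t≥0} a family of bounded linear operators on E with ‖P_t‖ ≤ 1 for all t ≥ 0 such that lim_{h↓0} (P_h u − u)/h exists for all u ∈ D. Let (S_t)_{t≥0} be a family of linear operators E → E such that S_t u = lim_{n→∞} P_{h_n}^{k_n} u for all u ∈ E, all null sequences (h_n) ⊂ (0,∞), and all (k_n) ⊂ ℕ with k_n h_n → t. Then for every u ∈ E for which v := lim_{h↓0}(P_h u − u)/h exists (in norm), one also has lim_{t↓0} (S_t u − u)/t = v. -/

import Mathlib

open Filter Finset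
open scoped Topology

private lemma chernoff_aux_contract {E : Type*} [NormedAddCommGroup E] [NormedSpace ℝ E]
    (f : E →L[ℝ] E) (hf : ‖f‖ ≤ 1) : ∀ (j : ℕ) (x : E), ‖(f ^ j) x‖ ≤ ‖x‖ := by
  intro j
  induction j with
  | zero => intro x; simp
  | succ j ih =>
    intro x
    rw [pow_succ, ContinuousLinearMap.mul_apply]
    refine (ih (f x)).trans ?_
    calc ‖f x‖ ≤ ‖f‖ * ‖x‖ := f.le_opNorm x
    _ ≤ 1 * ‖x‖ := mul_le_mul_of_nonneg_right hf (norm_nonneg x)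
    _ = ‖x‖ := one_mul _

private lemma chernoff_aux_tel {E : Type*} [NormedAddCommGroup E] [NormedSpace ℝ E]
    (f : E →L[ℝ] E) (hf : ∀ (j : ℕ) (x : E), ‖(f ^ j) x‖ ≤ ‖x‖) :
    ∀ (j : ℕ) (y : E), ‖(f ^ j) y - y‖ ≤ j * ‖f y - y‖ := by
  intro j
  induction j with
  | zero => intro y; simp
  | succ j ih =>
    intro y
    have key : (f ^ (j+1)) y - y = (f ^ j) (f y - y) + ((f ^ j) y - y) := by
      rw [pow_succ, ContinuousLinearMap.mul_apply, map_sub]; abel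
    rw [key]
    refine (norm_add_le _ _).trans ?_
    have h1 := hf j (f y - y)
    have h2 := ih y
    simp only [Nat.cast_add, Nat.cast_one]
    linarith

private lemma chernoff_aux_est {E : Type*} [NormedAddCommGroup E] [NormedSpace ℝ E]
    (f : E →L[ℝ] E) (hf : ∀ (j : ℕ) (x : E), ‖(f ^ j) x‖ ≤ ‖x‖) (x d : E) :
    ∀ n : ℕ, ‖(f ^ n) x - x - (n : ℝ) • d‖
      ≤ n * ‖f x - x - d‖ + ∑ j ∈ Finset.range n, ‖(f ^ j) d - d‖ := by
  intro n
  induction n with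
  | zero => simp
  | succ n ih =>
    have key : (f ^ (n+1)) x - x - ((n+1 : ℕ) : ℝ) • d
        = (f ^ n) (f x - x - d) + ((f ^ n) d - d) + ((f ^ n) x - x - (n : ℝ) • d) := by
      rw [pow_succ, ContinuousLinearMap.mul_apply, map_sub, map_sub]
      push_cast
      rw [add_smul, one_smul]
      abel
    rw [key, Finset.sum_range_succ]
    have h1 := hf n (f x - x - d)
    have h2 := norm_add_le ((f ^ n) (f x - x - d) + ((f ^ n) d - d)) ((f ^ n) x - x - (n:ℝ) • d)
    have h3 := norm_add_le ((f ^ n) (f x - x - d)) ((f ^ n) d - d)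
    simp only [Nat.cast_add, Nat.cast_one]
    linarith

theorem chernoff_infinitesimal_consistency
    {E : Type*} [NormedAddCommGroup E] [NormedSpace ℝ E] [CompleteSpace E]
    (D : Set E) (hD : Dense D)
    (P : ℝ → E →L[ℝ] E) (hP : ∀ t : ℝ, 0 ≤ t → ‖P t‖ ≤ 1)
    (hDlim : ∀ u ∈ D, ∃ v : E,
      Tendsto (fun h : ℝ => h⁻¹ • (P h u - u)) (𝓝[>] (0:ℝ)) (𝓝 v))
    (S : ℝ → E →ₗ[ℝ] E)
    (hS : ∀ (u : E) (t : ℝ), 0 ≤ t → ∀ (h : ℕ → ℝ) (k : ℕ → ℕ),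
      (∀ n, 0 < h n) → Tendsto h atTop (𝓝 0) →
      Tendsto (fun n => (k n : ℝ) * h n) atTop (𝓝 t) →
      Tendsto (fun n => ((P (h n)) ^ (k n)) u) atTop (𝓝 (S t u))) :
    ∀ (u v : E),
      Tendsto (fun h : ℝ => h⁻¹ • (P h u - u)) (𝓝[>] (0:ℝ)) (𝓝 v) →
      Tendsto (fun t : ℝ => t⁻¹ • (S t u - u)) (𝓝[>] (0:ℝ)) (𝓝 v) := by
  intro u v huv
  rw [Metric.tendsto_nhdsWithin_nhds]
  intro ε hε
  obtain ⟨w, hwD, hwv⟩ := hD.exists_dist_lt v (show (0:ℝ) < ε/8 by linarith)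
  obtain ⟨w', hw'⟩ := hDlim w hwD
  set C : ℝ := ‖w'‖ + 1 with hCdef
  have hCpos : 0 < C := by rw [hCdef]; positivity
  clear_value C
  -- get δ such that for 0 < h < δ, ‖P h w - w‖ ≤ h * C
  have h1 : (fun h : ℝ => h⁻¹ • (P h w - w)) ⁻¹' Metric.ball w' 1 ∈ 𝓝[>] (0:ℝ) :=
    hw' (Metric.ball_mem_nhds w' one_pos)
  rw [Metric.mem_nhdsWithin_iff] at h1
  obtain ⟨δ, hδpos, hδ⟩ := h1
  have hPw : ∀ h : ℝ, 0 < h → h < δ → ‖P h w - w‖ ≤ h * C := by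
    intro h hh hhδ
    have hmem : h ∈ Metric.ball (0:ℝ) δ ∩ Set.Ioi 0 := by
      constructor
      · simpa [Real.dist_eq, abs_of_pos hh] using hhδ
      · exact hh
    have hb := hδ hmem
    simp only [Set.mem_preimage, Metric.mem_ball, dist_eq_norm] at hb
    have hn : ‖h⁻¹ • (P h w - w)‖ ≤ C := by
      calc ‖h⁻¹ • (P h w - w)‖ = ‖h⁻¹ • (P h w - w) - w' + w'‖ := by congr 1; abel
      _ ≤ ‖h⁻¹ • (P h w - w) - w'‖ + ‖w'‖ := norm_add_le _ _
      _ ≤ C := by rw [hCdef]; linarith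
    have : ‖P h w - w‖ = h * ‖h⁻¹ • (P h w - w)‖ := by
      rw [norm_smul, norm_inv, Real.norm_eq_abs, abs_of_pos hh]
      field_simp
    rw [this]
    exact mul_le_mul_of_nonneg_left hn hh.le
  refine ⟨min δ (ε / C), lt_min hδpos (by positivity), ?_⟩
  intro t htpos htd
  have ht : 0 < t := htpos
  rw [Real.dist_eq, sub_zero, abs_of_pos ht] at htd
  have htδ : t < δ := lt_of_lt_of_le htd (min_le_left _ _)
  have htC : t < ε / C := lt_of_lt_of_le htd (min_le_right _ _)
  -- key estimate
  have hkey : ‖S t u - u - t • v‖ ≤ 2 * ‖v - w‖ * t + t ^ 2 * C / 2 := by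
    set hseq : ℕ → ℝ := fun n => t / (n + 1) with hseqdef
    set kseq : ℕ → ℕ := fun n => n + 1 with kseqdef
    have hpos : ∀ n, 0 < hseq n := fun n => div_pos ht (by positivity)
    have hto0 : Tendsto hseq atTop (𝓝 0) := by
      apply Tendsto.div_atTop (tendsto_const_nhds (x := t))
      exact tendsto_atTop_add_const_right _ 1 tendsto_natCast_atTop_atTop
    have hkh : ∀ n, (kseq n : ℝ) * hseq n = t := by
      intro n
      have : ((n:ℝ) + 1) ≠ 0 := by positivity
      simp only [hseqdef, kseqdef]
      push_cast
      field_simp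
    have hkht : Tendsto (fun n => (kseq n : ℝ) * hseq n) atTop (𝓝 t) := by
      simp only [hkh]; exact tendsto_const_nhds
    have hSlim := hS u t ht.le hseq kseq hpos hto0 hkht
    have hnorm : Tendsto (fun n => ‖((P (hseq n)) ^ (kseq n)) u - u - t • v‖) atTop
        (𝓝 ‖S t u - u - t • v‖) := ((hSlim.sub_const u).sub_const (t • v)).norm
    have hwithin : Tendsto hseq atTop (𝓝[>] (0:ℝ)) :=
      tendsto_nhdsWithin_of_tendsto_nhds_of_eventually_within hseq hto0
        (Eventually.of_forall fun n => hpos n)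
    have hquot : Tendsto (fun n => ‖(hseq n)⁻¹ • (P (hseq n) u - u) - v‖) atTop (𝓝 0) := by
      have := ((huv.comp hwithin).sub_const v).norm
      simpa using this
    have hb : Tendsto (fun n => t * ‖(hseq n)⁻¹ • (P (hseq n) u - u) - v‖
        + (2 * ‖v - w‖ * t + t ^ 2 * C / 2)) atTop
        (𝓝 (2 * ‖v - w‖ * t + t ^ 2 * C / 2)) := by
      have := (hquot.const_mul t).add_const (2 * ‖v - w‖ * t + t ^ 2 * C / 2)
      simpa using this
    refine le_of_tendsto_of_tendsto hnorm hb ?_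
    have hev : ∀ᶠ n in atTop, hseq n < δ :=
      hto0.eventually_lt_const hδpos
    filter_upwards [hev] with n hn
    set h := hseq n
    set k := kseq n
    have hh : 0 < h := hpos n
    have hfc : ∀ (j : ℕ) (x : E), ‖((P h) ^ j) x‖ ≤ ‖x‖ :=
      chernoff_aux_contract (P h) (hP h hh.le)
    have hest := chernoff_aux_est (P h) hfc u (h • v) k
    -- rewrite (k:ℝ) • (h • v) = t • v
    have hsmul : (k : ℝ) • (h • v) = t • v := by
      rw [smul_smul, hkh n]
    rw [hsmul] at hest
    -- first term
    have hfirst : (k : ℝ) * ‖P h u - u - h • v‖ = t * ‖h⁻¹ • (P h u - u) - v‖ := by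
      have : P h u - u - h • v = h • (h⁻¹ • (P h u - u) - v) := by
        rw [smul_sub, smul_inv_smul₀ hh.ne']
      rw [this, norm_smul, Real.norm_eq_abs, abs_of_pos hh, ← mul_assoc, hkh n]
    -- sum bound
    have hsumterm : ∀ j ∈ Finset.range k,
        ‖((P h) ^ j) (h • v) - h • v‖ ≤ 2 * h * ‖v - w‖ + (j : ℝ) * (h ^ 2 * C) := by
      intro j _
      have hdec : ((P h) ^ j) (h • v) - h • v
          = (((P h) ^ j) (h • (v - w)) - h • (v - w)) + (((P h) ^ j) (h • w) - h • w) := by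
        have hv : h • v = h • (v - w) + h • w := by rw [smul_sub]; abel
        rw [hv, map_add]; abel
      rw [hdec]
      have e1 : ‖((P h) ^ j) (h • (v - w)) - h • (v - w)‖ ≤ 2 * h * ‖v - w‖ := by
        calc ‖((P h) ^ j) (h • (v - w)) - h • (v - w)‖
            ≤ ‖((P h) ^ j) (h • (v - w))‖ + ‖h • (v - w)‖ := norm_sub_le _ _
        _ ≤ ‖h • (v - w)‖ + ‖h • (v - w)‖ := by
            have := hfc j (h • (v - w)); linarith
        _ = 2 * h * ‖v - w‖ := by
            rw [norm_smul, Real.norm_eq_abs, abs_of_pos hh]; ring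
      have e2 : ‖((P h) ^ j) (h • w) - h • w‖ ≤ (j : ℝ) * (h ^ 2 * C) := by
        refine (chernoff_aux_tel (P h) hfc j (h • w)).trans ?_
        have : ‖P h (h • w) - h • w‖ ≤ h ^ 2 * C := by
          have : P h (h • w) - h • w = h • (P h w - w) := by
            rw [map_smul, smul_sub]
          rw [this, norm_smul, Real.norm_eq_abs, abs_of_pos hh]
          have := hPw h hh hn
          nlinarith
        exact mul_le_mul_of_nonneg_left this (Nat.cast_nonneg j)
      exact (norm_add_le _ _).trans (by linarith)
    have hsum : ∑ j ∈ Finset.range k, ‖((P h) ^ j) (h • v) - h • v‖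
        ≤ 2 * ‖v - w‖ * t + t ^ 2 * C / 2 := by
      refine (Finset.sum_le_sum hsumterm).trans ?_
      rw [Finset.sum_add_distrib, Finset.sum_const, Finset.card_range,
        ← Finset.sum_mul]
      have hgauss : (∑ j ∈ Finset.range k, (j : ℝ)) ≤ (k : ℝ) * k / 2 := by
        have h2 : (∑ j ∈ Finset.range k, j) * 2 = k * (k - 1) := Finset.sum_range_id_mul_two k
        have h3 : k * (k - 1) ≤ k * k := Nat.mul_le_mul_left k (Nat.sub_le k 1)
        have h4 : ((∑ j ∈ Finset.range k, j : ℕ) : ℝ) * 2 ≤ (k : ℝ) * k := by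
          exact_mod_cast h2 ▸ (Nat.cast_le.mpr h3)
        push_cast at h4 ⊢
        linarith
      have hkh' := hkh n
      have hC2 : 0 ≤ h ^ 2 * C := by positivity
      have : (∑ j ∈ Finset.range k, (j : ℝ)) * (h ^ 2 * C) ≤ ((k:ℝ) * k / 2) * (h ^ 2 * C) :=
        mul_le_mul_of_nonneg_right hgauss hC2
      have hrw : ((k:ℝ) * k / 2) * (h ^ 2 * C) = t ^ 2 * C / 2 := by
        rw [← hkh']; ring
      have hrw2 : (k : ℕ) • (2 * h * ‖v - w‖) = (k : ℝ) * (2 * h * ‖v - w‖) := by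
        rw [nsmul_eq_mul]
      rw [hrw2]
      have : (k : ℝ) * (2 * h * ‖v - w‖) = 2 * ‖v - w‖ * t := by rw [← hkh']; ring
      linarith [mul_le_mul_of_nonneg_right hgauss hC2]
    calc ‖((P h) ^ k) u - u - t • v‖
        ≤ (k : ℝ) * ‖P h u - u - h • v‖ + ∑ j ∈ Finset.range k, ‖((P h) ^ j) (h • v) - h • v‖ := hest
    _ ≤ t * ‖h⁻¹ • (P h u - u) - v‖ + (2 * ‖v - w‖ * t + t ^ 2 * C / 2) := by
        rw [hfirst]; linarith
  -- conclude
  rw [dist_eq_norm]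
  have hrw : t⁻¹ • (S t u - u) - v = t⁻¹ • (S t u - u - t • v) := by
    simp only [smul_sub, smul_smul, inv_mul_cancel₀ ht.ne', one_smul]
  rw [hrw, norm_smul, Real.norm_eq_abs, abs_of_pos (inv_pos.mpr ht)]
  have hvw : ‖v - w‖ < ε / 8 := by rwa [dist_eq_norm] at hwv
  have hbound : t⁻¹ * ‖S t u - u - t • v‖ ≤ t⁻¹ * (2 * ‖v - w‖ * t + t ^ 2 * C / 2) :=
    mul_le_mul_of_nonneg_left hkey (inv_pos.mpr ht).le
  have heq : t⁻¹ * (2 * ‖v - w‖ * t + t ^ 2 * C / 2) = 2 * ‖v - w‖ + t * C / 2 := by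
    field_simp
  have htCε : t * C < ε := by
    have h1 : t * C < (ε / C) * C := mul_lt_mul_of_pos_right htC hCpos
    have h2 : (ε / C) * C = ε := div_mul_cancel₀ ε hCpos.ne'
    linarith
  calc t⁻¹ * ‖S t u - u - t • v‖ ≤ 2 * ‖v - w‖ + t * C / 2 := by rw [← heq]; exact hbound
  _ < ε := by linarith
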